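/- Let n ≥ 1 be an integer and t > 0. For every real λ > 0 and every (z,w) ∈ ℂ^{2n}, the function η ↦ e^{2λη} W_t^+(z,w,iη) is absolutely integrable on ℝ and W_t^λ(z,w) = e^{-2tλ²} ∫_ℝ e^{2λη} W_t^+(z,w,iη) dη, where W_t^λ is the positive λ-twisted weight function. -/

import Mathlib

open MeasureTheory Complex Filter Topology

noncomputable section

/-- The weight function with complex parameter `μ` (for `Re μ ≠ 0`):
`W_t^μ(x+iy, u+iv) = 4^n exp(μ(u·y - v·x)) (4π)^{-n} (μ/sinh(2tμ))^n
  exp(-μ·coth(2tμ)·(|y|²+|v|²))`. -/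
def WtC (n : ℕ) (t : ℝ) (mu : ℂ) (z w : Fin n → ℂ) : ℂ :=
  4 ^ n *
    Complex.exp (mu * ((((∑ j, (w j).re * (z j).im) - ∑ j, (w j).im * (z j).re : ℝ)) : ℂ)) *
    (((4 * Real.pi) ^ n)⁻¹ : ℝ) * (mu / Complex.sinh (2 * t * mu)) ^ n *
    Complex.exp (-(mu * (Complex.cosh (2 * t * mu) / Complex.sinh (2 * t * mu))) *
      (((∑ j, (z j).im ^ 2) + ∑ j, (w j).im ^ 2 : ℝ) : ℂ))

/-- The partial weight function `W_t^+`, defined with the choice `λ = 1 > 0`: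
`W_t^+(z,w,ζ) = (2π)^{-1} ∫_ℝ exp(2t(λ+is/2)²) exp(-2η(λ+is/2)) W_t^{λ+is/2}(z,w) ds`,
with `η = Im ζ` (the value is independent of the choice of `λ > 0`). -/
def Wplus (n : ℕ) (t : ℝ) (z w : Fin n → ℂ) (ζ : ℂ) : ℂ :=
  ((2 * Real.pi)⁻¹ : ℝ) *
    ∫ s : ℝ,
      Complex.exp (2 * t * ((1 : ℂ) + Complex.I * s / 2) ^ 2) *
        Complex.exp (-2 * (ζ.im : ℂ) * ((1 : ℂ) + Complex.I * s / 2)) *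
        WtC n t ((1 : ℂ) + Complex.I * s / 2) z w

lemma norm_cexp' (ζ : ℂ) : ‖Complex.exp ζ‖ = Real.exp ζ.re := by
  rw [Complex.norm_exp]

lemma sinh_norm_ge (ζ : ℂ) : Real.sinh ζ.re ≤ ‖Complex.sinh ζ‖ := by
  have h1 : ‖Complex.sinh ζ‖ = ‖Complex.exp ζ - Complex.exp (-ζ)‖ / 2 := by
    rw [show Complex.sinh ζ = (Complex.exp ζ - Complex.exp (-ζ)) / 2 from rfl]
    simp
  have h2 := norm_sub_norm_le (Complex.exp ζ) (Complex.exp (-ζ))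
  rw [norm_cexp', norm_cexp'] at h2
  rw [Real.sinh_eq, h1]
  simp only [Complex.neg_re] at h2
  linarith

lemma cosh_norm_le (ζ : ℂ) : ‖Complex.cosh ζ‖ ≤ Real.cosh ζ.re := by
  have h1 : ‖Complex.cosh ζ‖ = ‖Complex.exp ζ + Complex.exp (-ζ)‖ / 2 := by
    rw [show Complex.cosh ζ = (Complex.exp ζ + Complex.exp (-ζ)) / 2 from rfl]
    simp
  have h2 := norm_add_le (Complex.exp ζ) (Complex.exp (-ζ))
  rw [norm_cexp', norm_cexp'] at h2
  rw [Real.cosh_eq, h1]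
  simp only [Complex.neg_re] at h2
  linarith

lemma sinh_ne_zero' {ζ : ℂ} (h : 0 < ζ.re) : Complex.sinh ζ ≠ 0 := by
  have h1 : (0:ℝ) < Real.sinh ζ.re := by
    rw [← Real.sinh_zero]; exact Real.sinh_lt_sinh.2 h
  have := sinh_norm_ge ζ
  intro h0
  rw [h0, norm_zero] at this
  linarith

lemma line_integrable {f : ℂ → ℂ} {x k C : ℝ} (hk : 0 < k)
    (hcont : ∀ μ : ℂ, 0 < μ.re → ContinuousAt f μ)
    (hB : ∀ y : ℝ, ‖f (x + y * I)‖ ≤ C * Real.exp (-k * y ^ 2))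
    (hx : 0 < x) :
    Integrable (fun y : ℝ => f ((x : ℝ) + y * I)) := by
  have hc : Continuous (fun y : ℝ => f ((x:ℝ) + y * I)) := by
    rw [continuous_iff_continuousAt]
    intro y
    apply ContinuousAt.comp
    · apply hcont; simp [hx]
    · fun_prop
  exact Integrable.mono' ((integrable_exp_neg_mul_sq hk).const_mul C)
    hc.aestronglyMeasurable (Filter.Eventually.of_forall hB)

lemma vertical_shift_le {f : ℂ → ℂ} {a b k C : ℝ} (ha : 0 < a) (hab : a ≤ b)
    (hd : ∀ μ : ℂ, 0 < μ.re → DifferentiableAt ℂ f μ) (hk : 0 < k)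
    (hB : ∀ μ : ℂ, μ.re ∈ Set.Icc a b → ‖f μ‖ ≤ C * Real.exp (-k * μ.im ^ 2)) :
    ∫ y : ℝ, f ((a : ℝ) + y * I) = ∫ y : ℝ, f ((b : ℝ) + y * I) := by
  have hcont : ∀ μ : ℂ, 0 < μ.re → ContinuousAt f μ := fun μ hμ => (hd μ hμ).continuousAt
  have hBa : ∀ x : ℝ, x ∈ Set.Icc a b → ∀ y : ℝ, ‖f (x + y * I)‖ ≤ C * Real.exp (-k * y ^ 2) := by
    intro x hx y
    have := hB ((x:ℂ) + y * I) (by simpa using hx)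
    simpa using this
  have hia : Integrable (fun y : ℝ => f ((a : ℝ) + y * I)) :=
    line_integrable hk hcont (hBa a ⟨le_refl a, hab⟩) ha
  have hib : Integrable (fun y : ℝ => f ((b : ℝ) + y * I)) :=
    line_integrable hk hcont (hBa b ⟨hab, le_refl b⟩) (lt_of_lt_of_le ha hab)
  -- rectangle identity
  have rect : ∀ T : ℝ,
      (∫ x : ℝ in a..b, f (x + (-T : ℝ) * I)) - (∫ x : ℝ in a..b, f (x + (T:ℝ) * I)) +
        I • (∫ y : ℝ in (-T : ℝ)..T, f ((b:ℝ) + y * I)) -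
        I • (∫ y : ℝ in (-T : ℝ)..T, f ((a:ℝ) + y * I)) = 0 := by
    intro T
    have := Complex.integral_boundary_rect_eq_zero_of_differentiableOn f
      (Complex.mk a (-T)) (Complex.mk b T) ?_
    · simpa using this
    · intro μ hμ
      rw [Complex.mem_reProdIm] at hμ
      have hre : μ.re ∈ Set.uIcc a b := hμ.1
      rw [Set.uIcc_of_le hab] at hre
      exact (hd μ (lt_of_lt_of_le ha hre.1)).differentiableWithinAt
  -- horizontal sides tend to zero
  have hor : ∀ T : ℝ, ‖∫ x : ℝ in a..b, f (x + (T:ℝ) * I)‖ ≤ (C * Real.exp (-k * T ^ 2)) * |b - a| := by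
    intro T
    apply intervalIntegral.norm_integral_le_of_norm_le_const
    intro x hx
    have hx' : x ∈ Set.Icc a b := by
      rw [Set.uIoc_of_le hab] at hx
      exact ⟨le_of_lt hx.1, hx.2⟩
    have := hBa x hx' T
    simpa using this
  have hten : Tendsto (fun T : ℝ => C * Real.exp (-k * T ^ 2) * |b - a|) atTop (nhds 0) := by
    have h1 : Tendsto (fun T : ℝ => -k * T ^ 2) atTop atBot := by
      apply Tendsto.const_mul_atTop_of_neg (neg_neg_iff_pos.mpr hk)
      exact tendsto_pow_atTop (by norm_num)
    have := (Real.tendsto_exp_atBot.comp h1).const_mul C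
    simpa [mul_comm, mul_assoc] using this.mul_const |b - a|
  have hH1 : Tendsto (fun T : ℝ => ∫ x : ℝ in a..b, f (x + (T:ℝ) * I)) atTop (nhds 0) :=
    squeeze_zero_norm hor hten
  have hH2 : Tendsto (fun T : ℝ => ∫ x : ℝ in a..b, f (x + (-T : ℝ) * I)) atTop (nhds 0) := by
    refine squeeze_zero_norm (fun T => ?_) hten
    have := hor (-T)
    simpa using this
  have hV : ∀ (x : ℝ), Integrable (fun y : ℝ => f ((x : ℝ) + y * I)) →
      Tendsto (fun T : ℝ => ∫ y : ℝ in (-T : ℝ)..T, f ((x:ℝ) + y * I)) atTop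
        (nhds (∫ y : ℝ, f ((x:ℝ) + y * I))) := by
    intro x hint
    exact intervalIntegral_tendsto_integral hint tendsto_neg_atTop_atBot tendsto_id
  have key : Tendsto (fun T : ℝ =>
      (∫ x : ℝ in a..b, f (x + (-T : ℝ) * I)) - (∫ x : ℝ in a..b, f (x + (T:ℝ) * I)) +
        I • (∫ y : ℝ in (-T : ℝ)..T, f ((b:ℝ) + y * I)) -
        I • (∫ y : ℝ in (-T : ℝ)..T, f ((a:ℝ) + y * I))) atTop
      (nhds (0 - 0 + I • (∫ y : ℝ, f ((b:ℝ) + y * I)) - I • (∫ y : ℝ, f ((a:ℝ) + y * I)))) := by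
    exact (((hH2.sub hH1).add ((hV b hib).const_smul I)).sub ((hV a hia).const_smul I))
  have heq : (0 : ℂ) - 0 + I • (∫ y : ℝ, f ((b:ℝ) + y * I)) - I • (∫ y : ℝ, f ((a:ℝ) + y * I)) = 0 := by
    apply tendsto_nhds_unique key
    simp only [rect]
    exact tendsto_const_nhds
  rw [sub_eq_zero] at heq
  simpa using heq.symm

def Fg (n : ℕ) (t η : ℝ) (z w : Fin n → ℂ) (mu : ℂ) : ℂ :=
  Complex.exp (2 * t * mu ^ 2) * Complex.exp (-2 * (η : ℂ) * mu) * WtC n t mu z w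

lemma two_t_mu_re {t : ℝ} (mu : ℂ) : (2 * (t:ℂ) * mu).re = 2 * t * mu.re := by
  have : (2 * (t:ℂ) * mu) = ((2 * t : ℝ) : ℂ) * mu := by push_cast; ring
  rw [this, Complex.re_ofReal_mul]

lemma Fg_differentiableAt {n : ℕ} {t : ℝ} (ht : 0 < t) {η : ℝ} {z w : Fin n → ℂ}
    {mu : ℂ} (hmu : 0 < mu.re) : DifferentiableAt ℂ (Fg n t η z w) mu := by
  have hs : Complex.sinh (2 * t * mu) ≠ 0 := by
    apply sinh_ne_zero'
    rw [two_t_mu_re]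
    positivity
  have hid : DifferentiableAt ℂ (fun μ : ℂ => μ) mu := differentiableAt_id
  have hsinh : DifferentiableAt ℂ (fun μ : ℂ => Complex.sinh (2 * t * μ)) mu :=
    (hid.const_mul _).csinh
  have hcosh : DifferentiableAt ℂ (fun μ : ℂ => Complex.cosh (2 * t * μ)) mu :=
    (hid.const_mul _).ccosh
  have h1 : DifferentiableAt ℂ (fun μ : ℂ => Complex.exp (2 * t * μ ^ 2)) mu :=
    ((hid.pow 2).const_mul _).cexp
  have h2 : DifferentiableAt ℂ (fun μ : ℂ => Complex.exp (-2 * (η:ℂ) * μ)) mu :=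
    (hid.const_mul _).cexp
  have h3 : DifferentiableAt ℂ (fun μ : ℂ => WtC n t μ z w) mu := by
    unfold WtC
    apply DifferentiableAt.mul
    apply DifferentiableAt.mul
    apply DifferentiableAt.mul
    apply DifferentiableAt.mul
    · exact differentiableAt_const _
    · exact (hid.mul_const _).cexp
    · exact differentiableAt_const _
    · exact (hid.div hsinh hs).pow n
    · exact (((hid.mul (hcosh.div hsinh hs)).neg).mul_const _).cexp
  exact (h1.mul h2).mul h3


lemma absorb_ineq {t c yv : ℝ} (ht : 0 < t) (hc : 0 ≤ c) :
    c * |yv| ≤ c ^ 2 / (4 * t) + t * yv ^ 2 := by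
  have h1 : (0:ℝ) ≤ (2 * t * |yv| - c) ^ 2 / (4 * t) := by positivity
  have key : c ^ 2 / (4 * t) + t * yv ^ 2 - c * |yv| = (2 * t * |yv| - c) ^ 2 / (4 * t) := by
    rw [← _root_.sq_abs yv]
    field_simp
    ring_nf
  linarith

set_option maxHeartbeats 1000000 in
lemma Fg_norm_le {n : ℕ} {t : ℝ} (ht : 0 < t) (z w : Fin n → ℂ)
    {a b : ℝ} (ha : 0 < a) (hab : a ≤ b) (η : ℝ) :
    ∃ C : ℝ, 0 ≤ C ∧ ∀ mu : ℂ, mu.re ∈ Set.Icc a b →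
      ‖Fg n t η z w mu‖ ≤ C * Real.exp (-t * mu.im ^ 2) := by
  set A : ℝ := ((∑ j, (w j).re * (z j).im) - ∑ j, (w j).im * (z j).re : ℝ) with hA
  set R : ℝ := ((∑ j, (z j).im ^ 2) + ∑ j, (w j).im ^ 2 : ℝ) with hR
  clear_value A R
  set s₁ : ℝ := Real.sinh (2 * t * a) with hs₁
  set c₂ : ℝ := Real.cosh (2 * t * b) with hc₂
  have hs1pos : 0 < s₁ := by
    rw [hs₁, ← Real.sinh_zero]
    exact Real.sinh_lt_sinh.2 (by positivity)
  set K : ℝ := c₂ / s₁ with hK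
  set c : ℝ := |R| * K + n with hc
  have hb : 0 < b := lt_of_lt_of_le ha hab
  have hc2pos : 0 < c₂ := Real.cosh_pos _
  have hKpos : 0 < K := div_pos hc2pos hs1pos
  have hcpos : 0 ≤ c := by positivity
  set D0 : ℝ := 4 ^ n * ((4 * Real.pi) ^ n)⁻¹ * (s₁⁻¹) ^ n with hD0
  have hD0pos : 0 < D0 := by rw [hD0]; positivity
  set CE : ℝ := 2 * t * b ^ 2 + 2 * |η| * b + b * |A| + |R| * K * b + n * b + c ^ 2 / (4 * t)
    with hCE
  refine ⟨D0 * Real.exp CE, by positivity, ?_⟩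
  intro mu hmu
  obtain ⟨hmua, hmub⟩ := hmu
  have hx0 : 0 < mu.re := lt_of_lt_of_le ha hmua
  set x := mu.re
  set y := mu.im
  set ν : ℂ := 2 * (t : ℂ) * mu with hν
  have hνre : ν.re = 2 * t * x := two_t_mu_re mu
  have hsν : s₁ ≤ ‖Complex.sinh ν‖ := by
    refine le_trans ?_ (sinh_norm_ge ν)
    rw [hνre, hs₁]
    exact Real.sinh_le_sinh.2 (by nlinarith)
  have hcν : ‖Complex.cosh ν‖ ≤ c₂ := by
    refine le_trans (cosh_norm_le ν) ?_
    rw [hνre, hc₂]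
    apply Real.cosh_le_cosh.2
    rw [abs_of_pos (by positivity), abs_of_pos (by positivity)]
    nlinarith
  have hmuabs : ‖mu‖ ≤ b + |y| := by
    refine le_trans (Complex.norm_le_abs_re_add_abs_im mu) ?_
    have hxx : |x| = x := abs_of_pos hx0
    rw [hxx]
    linarith
  have hr1 : (2 * (t:ℂ) * mu ^ 2).re = 2 * t * (x ^ 2 - y ^ 2) := by
    simp [pow_two, Complex.mul_re, Complex.mul_im]
    try ring
    exact Or.inl rfl
  have hr2 : (-2 * (η:ℂ) * mu).re = -2 * η * x := by
    simp [Complex.mul_re, Complex.mul_im]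
    exact Or.inl rfl
  have hrA : (mu * (A:ℂ)).re = x * A := by
    simp [Complex.mul_re]
    exact Or.inl rfl
  have hr3 : (-(mu * (Complex.cosh ν / Complex.sinh ν)) * (R:ℂ)).re
      ≤ |R| * K * (b + |y|) := by
    refine le_trans (Complex.re_le_norm _) ?_
    rw [norm_mul, norm_neg, norm_mul, norm_div, Complex.norm_real, Real.norm_eq_abs]
    have h1 : ‖mu‖ * (‖Complex.cosh ν‖ / ‖Complex.sinh ν‖)
        ≤ (b + |y|) * K := by
      apply mul_le_mul
      · exact hmuabs
      · rw [hK]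
        apply div_le_div₀ (le_of_lt hc2pos) _ hs1pos _
        · exact hcν
        · exact hsν
      · positivity
      · positivity
    calc ‖mu‖ * (‖Complex.cosh ν‖ / ‖Complex.sinh ν‖) * |R|
        ≤ (b + |y|) * K * |R| := mul_le_mul_of_nonneg_right h1 (abs_nonneg R)
      _ = |R| * K * (b + |y|) := by ring
  have hF1 : Real.exp ((2 * (t:ℂ) * mu ^ 2).re) ≤ Real.exp (2 * t * (b ^ 2 - y ^ 2)) :=
    Real.exp_le_exp.2 (by rw [hr1]; nlinarith [pow_le_pow_left₀ hx0.le hmub 2, ht.le])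
  have hF2 : Real.exp ((-2 * (η:ℂ) * mu).re) ≤ Real.exp (2 * |η| * b) :=
    Real.exp_le_exp.2 (by
      rw [hr2]
      nlinarith [neg_abs_le η, le_abs_self η, abs_nonneg η])
  have hFA : Real.exp ((mu * (A:ℂ)).re) ≤ Real.exp (b * |A|) :=
    Real.exp_le_exp.2 (by
      rw [hrA]
      calc x * A ≤ |x * A| := le_abs_self _
        _ = x * |A| := by rw [abs_mul, abs_of_pos hx0]
        _ ≤ b * |A| := mul_le_mul_of_nonneg_right hmub (abs_nonneg A))
  have hFq : (‖mu‖ / ‖Complex.sinh ν‖) ^ n ≤ ((b + |y|) / s₁) ^ n := by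
    apply pow_le_pow_left₀ (by positivity)
    apply div_le_div₀ (by positivity) hmuabs hs1pos hsν
  have hF3 : Real.exp ((-(mu * (Complex.cosh ν / Complex.sinh ν)) * (R:ℂ)).re)
      ≤ Real.exp (|R| * K * (b + |y|)) := Real.exp_le_exp.2 hr3
  have h4 : ‖(4:ℂ)‖ = (4:ℝ) := by simp
  have hcR : ‖((((4 * Real.pi) ^ n)⁻¹ : ℝ) : ℂ)‖ = ((4 * Real.pi) ^ n)⁻¹ := by
    rw [Complex.norm_real, Real.norm_eq_abs]
    exact abs_of_nonneg (by positivity)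
  have hnorm : ‖Fg n t η z w mu‖ =
      Real.exp ((2 * (t:ℂ) * mu ^ 2).re) * Real.exp ((-2 * (η:ℂ) * mu).re) *
        (4 ^ n * Real.exp ((mu * (A:ℂ)).re) * ((4 * Real.pi) ^ n)⁻¹ *
          (‖mu‖ / ‖Complex.sinh ν‖) ^ n *
          Real.exp ((-(mu * (Complex.cosh ν / Complex.sinh ν)) * (R:ℂ)).re)) := by
    simp only [Fg, WtC, norm_mul, norm_pow, norm_div, norm_cexp', h4, hcR, ← hA, ← hR, ← hν]
  have step1 : ‖Fg n t η z w mu‖ ≤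
      Real.exp (2 * t * (b ^ 2 - y ^ 2)) * Real.exp (2 * |η| * b) *
        (4 ^ n * Real.exp (b * |A|) * ((4 * Real.pi) ^ n)⁻¹ *
          ((b + |y|) / s₁) ^ n * Real.exp (|R| * K * (b + |y|))) := by
    rw [hnorm]
    apply mul_le_mul (mul_le_mul hF1 hF2 (by positivity) (by positivity))
    · apply mul_le_mul
      apply mul_le_mul
      apply mul_le_mul
      apply mul_le_mul le_rfl hFA (by positivity) (by positivity)
      · exact le_rfl
      · positivity
      · positivity
      · exact hFq
      · positivity
      · positivity
      · exact hF3
      · positivity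
      · positivity
    · positivity
    · positivity
  refine le_trans step1 ?_
  have hpow : ((b + |y|) / s₁) ^ n ≤ (s₁⁻¹) ^ n * Real.exp (n * (b + |y|)) := by
    have h1 : (b + |y|) ≤ Real.exp (b + |y|) := by
      have := Real.add_one_le_exp (b + |y|)
      linarith
    calc ((b + |y|) / s₁) ^ n = (s₁⁻¹) ^ n * (b + |y|) ^ n := by
          rw [div_eq_inv_mul, mul_pow]
      _ ≤ (s₁⁻¹) ^ n * Real.exp (b + |y|) ^ n := by
          apply mul_le_mul_of_nonneg_left _ (by positivity)
          exact pow_le_pow_left₀ (by positivity) h1 n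
      _ = (s₁⁻¹) ^ n * Real.exp (n * (b + |y|)) := by
          rw [← Real.exp_nat_mul]
  have step2 : Real.exp (2 * t * (b ^ 2 - y ^ 2)) * Real.exp (2 * |η| * b) *
        (4 ^ n * Real.exp (b * |A|) * ((4 * Real.pi) ^ n)⁻¹ *
          ((b + |y|) / s₁) ^ n * Real.exp (|R| * K * (b + |y|)))
      ≤ D0 * Real.exp (2 * t * (b ^ 2 - y ^ 2) + 2 * |η| * b + b * |A|
          + n * (b + |y|) + |R| * K * (b + |y|)) := by
    have e1 : D0 * Real.exp (2 * t * (b ^ 2 - y ^ 2) + 2 * |η| * b + b * |A|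
          + n * (b + |y|) + |R| * K * (b + |y|))
        = Real.exp (2 * t * (b ^ 2 - y ^ 2)) * Real.exp (2 * |η| * b) *
          (4 ^ n * Real.exp (b * |A|) * ((4 * Real.pi) ^ n)⁻¹ *
            ((s₁⁻¹) ^ n * Real.exp (n * (b + |y|))) * Real.exp (|R| * K * (b + |y|))) := by
      rw [Real.exp_add, Real.exp_add, Real.exp_add, Real.exp_add, hD0]
      ring
    rw [e1]
    apply mul_le_mul_of_nonneg_left _ (by positivity)
    apply mul_le_mul_of_nonneg_right _ (by positivity)
    apply mul_le_mul_of_nonneg_left _ (by positivity)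
    exact hpow
  refine le_trans step2 ?_
  have e2 : Real.exp (2 * t * (b ^ 2 - y ^ 2) + 2 * |η| * b + b * |A|
        + n * (b + |y|) + |R| * K * (b + |y|)) ≤ Real.exp CE * Real.exp (-t * y ^ 2) := by
    rw [← Real.exp_add]
    apply Real.exp_le_exp.2
    rw [hCE]
    have f1 : (n : ℝ) * (b + |y|) + |R| * K * (b + |y|) = c * (b + |y|) := by
      rw [hc]; ring
    have f2 : |R| * K * b + (n:ℝ) * b = c * b := by rw [hc]; ring
    have f3 := absorb_ineq (c := c) (yv := y) ht hcpos
    linarith [f1, f2, f3]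
  calc D0 * Real.exp (2 * t * (b ^ 2 - y ^ 2) + 2 * |η| * b + b * |A|
        + n * (b + |y|) + |R| * K * (b + |y|))
      ≤ D0 * (Real.exp CE * Real.exp (-t * y ^ 2)) := mul_le_mul_of_nonneg_left e2 hD0pos.le
    _ = D0 * Real.exp CE * Real.exp (-t * y ^ 2) := (mul_assoc _ _ _).symm

open scoped FourierTransform

lemma Fg_shift {n : ℕ} {t : ℝ} (ht : 0 < t) (z w : Fin n → ℂ)
    {a b : ℝ} (ha : 0 < a) (hb : 0 < b) (η : ℝ) :
    ∫ y : ℝ, Fg n t η z w (a + y * I) = ∫ y : ℝ, Fg n t η z w (b + y * I) := by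
  rcases le_total a b with h | h
  · obtain ⟨C, _, hC⟩ := Fg_norm_le ht z w ha h η
    exact vertical_shift_le ha h (fun μ hμ => Fg_differentiableAt ht hμ) ht hC
  · obtain ⟨C, _, hC⟩ := Fg_norm_le ht z w hb h η
    exact (vertical_shift_le hb h (fun μ hμ => Fg_differentiableAt ht hμ) ht hC).symm

lemma Fg_line_integrable {n : ℕ} {t : ℝ} (ht : 0 < t) (z w : Fin n → ℂ)
    {x : ℝ} (hx : 0 < x) (η : ℝ) :
    Integrable (fun y : ℝ => Fg n t η z w ((x : ℝ) + y * I)) := by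
  obtain ⟨C, _, hC⟩ := Fg_norm_le ht z w hx le_rfl η
  exact line_integrable (C := C) ht (fun μ hμ => (Fg_differentiableAt ht hμ).continuousAt)
    (fun y => by simpa using hC ((x:ℂ) + y * I) (by simp)) hx

lemma Fg_split {n : ℕ} (t : ℝ) (z w : Fin n → ℂ) (η : ℝ) (mu : ℂ) :
    Fg n t η z w mu = Complex.exp (-2 * (η:ℂ) * mu) * Fg n t 0 z w mu := by
  simp only [Fg, Complex.ofReal_zero, mul_zero, zero_mul, neg_zero, Complex.exp_zero, mul_one]
  ring

lemma Fg_line_norm {n : ℕ} (t : ℝ) (z w : Fin n → ℂ) (η : ℝ) (x y : ℝ) :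
    ‖Fg n t η z w ((x:ℝ) + y * I)‖ = Real.exp (-2 * η * x) * ‖Fg n t 0 z w ((x:ℝ) + y * I)‖ := by
  rw [Fg_split t z w η, norm_mul, norm_cexp']
  congr 2
  simp [Complex.mul_re, Complex.mul_im]

/-- `𝓕` of the function `g_η(y) = Fg(λ+iy)` expressed via a vertical-line integral. -/
lemma Fg_fourier_eq {n : ℕ} {t : ℝ} (z w : Fin n → ℂ) {lam : ℝ} (ξ : ℝ) :
    𝓕 (fun y : ℝ => Fg n t 0 z w ((lam : ℝ) + y * I)) ξ
      = Complex.exp ((2 * Real.pi * ξ * lam : ℝ)) *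
          ∫ y : ℝ, Fg n t (Real.pi * ξ) z w ((lam : ℝ) + y * I) := by
  have key : ∀ y : ℝ, Fg n t (Real.pi * ξ) z w ((lam : ℝ) + y * I)
      = Complex.exp ((-2 * Real.pi * ξ * lam : ℝ)) *
          (Complex.exp ((-2 * Real.pi * y * ξ : ℝ) * I) * Fg n t 0 z w ((lam : ℝ) + y * I)) := by
    intro y
    rw [Fg_split t z w (Real.pi * ξ)]
    rw [← mul_assoc, ← Complex.exp_add]
    congr 2
    push_cast
    ring
  rw [Real.fourier_real_eq_integral_exp_smul]
  have : (∫ y : ℝ, Fg n t (Real.pi * ξ) z w ((lam : ℝ) + y * I))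
      = Complex.exp ((-2 * Real.pi * ξ * lam : ℝ)) *
        ∫ y : ℝ, Complex.exp ((-2 * Real.pi * y * ξ : ℝ) * I) * Fg n t 0 z w ((lam : ℝ) + y * I) := by
    simp_rw [key]
    rw [integral_const_mul]
  rw [this, ← mul_assoc, ← Complex.exp_add]
  have h0 : ((2 * Real.pi * ξ * lam : ℝ) : ℂ) + ((-2 * Real.pi * ξ * lam : ℝ) : ℂ) = 0 := by
    push_cast; ring
  rw [h0, Complex.exp_zero, one_mul]
  simp [smul_eq_mul]

lemma integrable_exp_neg_abs_mul {c : ℝ} (hc : 0 < c) :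
    Integrable (fun x : ℝ => Real.exp (-c * |x|)) := by
  have h1 : IntegrableOn (fun x : ℝ => Real.exp (-c * |x|)) (Set.Ici 0) := by
    apply ((integrableOn_Ici_iff_integrableOn_Ioi (f := fun x : ℝ => Real.exp (-c * x)) (b := 0)).2 (exp_neg_integrableOn_Ioi 0 hc)).congr_fun
    · intro x hx
      simp only [_root_.abs_of_nonneg (Set.mem_Ici.1 hx)]
    · exact measurableSet_Ici
  have h2 : IntegrableOn (fun x : ℝ => Real.exp (-c * |x|)) (Set.Iic 0) := by
    have hmp : MeasurePreserving (fun x : ℝ => -x) volume volume :=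
      Measure.measurePreserving_neg volume
    have h4 := (hmp.integrableOn_comp_preimage
      (MeasurableEquiv.neg ℝ).measurableEmbedding).2 h1
    simpa [Function.comp_def, abs_neg, neg_mul] using h4
  have := h1.union h2
  rwa [show Set.Ici (0:ℝ) ∪ Set.Iic 0 = Set.univ from by
    ext x; simp [le_total 0 x], integrableOn_univ] at this

lemma fourier_g_bound {n : ℕ} {t : ℝ} (ht : 0 < t) (z w : Fin n → ℂ)
    {lam : ℝ} (hlam : 0 < lam) {a : ℝ} (ha : 0 < a) (ξ : ℝ) :
    ‖𝓕 (fun y : ℝ => Fg n t 0 z w ((lam : ℝ) + y * I)) ξ‖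
      ≤ Real.exp (2 * Real.pi * ξ * (lam - a)) *
          ∫ y : ℝ, ‖Fg n t 0 z w ((a : ℝ) + y * I)‖ := by
  rw [Fg_fourier_eq z w ξ, Fg_shift ht z w hlam ha (Real.pi * ξ), norm_mul, norm_cexp']
  have h1 : ‖∫ y : ℝ, Fg n t (Real.pi * ξ) z w ((a : ℝ) + y * I)‖
      ≤ Real.exp (-2 * (Real.pi * ξ) * a) * ∫ y : ℝ, ‖Fg n t 0 z w ((a : ℝ) + y * I)‖ := by
    refine le_trans (norm_integral_le_integral_norm _) ?_
    have h2 : ∀ y : ℝ, ‖Fg n t (Real.pi * ξ) z w ((a : ℝ) + y * I)‖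
        = Real.exp (-2 * (Real.pi * ξ) * a) * ‖Fg n t 0 z w ((a : ℝ) + y * I)‖ :=
      fun y => Fg_line_norm t z w (Real.pi * ξ) a y
    rw [MeasureTheory.integral_congr_ae (Filter.Eventually.of_forall h2),
      MeasureTheory.integral_const_mul]
  calc Real.exp (((2 * Real.pi * ξ * lam : ℝ) : ℂ)).re *
        ‖∫ y : ℝ, Fg n t (Real.pi * ξ) z w ((a : ℝ) + y * I)‖
      ≤ Real.exp (((2 * Real.pi * ξ * lam : ℝ) : ℂ)).re *
        (Real.exp (-2 * (Real.pi * ξ) * a) * ∫ y : ℝ, ‖Fg n t 0 z w ((a : ℝ) + y * I)‖) :=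
        mul_le_mul_of_nonneg_left h1 (Real.exp_nonneg _)
    _ = Real.exp (2 * Real.pi * ξ * (lam - a)) *
          ∫ y : ℝ, ‖Fg n t 0 z w ((a : ℝ) + y * I)‖ := by
        rw [Complex.ofReal_re, ← mul_assoc, ← Real.exp_add]
        congr 2
        ring

lemma fourier_g_integrable {n : ℕ} {t : ℝ} (ht : 0 < t) (z w : Fin n → ℂ)
    {lam : ℝ} (hlam : 0 < lam) :
    Integrable (𝓕 (fun y : ℝ => Fg n t 0 z w ((lam : ℝ) + y * I))) := by
  set M1 : ℝ := ∫ y : ℝ, ‖Fg n t 0 z w ((2 * lam : ℝ) + y * I)‖ with hM1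
  set M2 : ℝ := ∫ y : ℝ, ‖Fg n t 0 z w ((lam / 2 : ℝ) + y * I)‖ with hM2
  have hM1n : 0 ≤ M1 := integral_nonneg (fun y => norm_nonneg _)
  have hM2n : 0 ≤ M2 := integral_nonneg (fun y => norm_nonneg _)
  set M : ℝ := max M1 M2 with hM
  have hcont : Continuous (𝓕 (fun y : ℝ => Fg n t 0 z w ((lam : ℝ) + y * I))) :=
    VectorFourier.fourierIntegral_continuous Real.continuous_fourierChar
      (by exact continuous_fst.inner continuous_snd)
      (Fg_line_integrable ht z w hlam 0)
  apply Integrable.mono' ((integrable_exp_neg_abs_mul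
    (show (0:ℝ) < Real.pi * lam by positivity)).const_mul M) hcont.aestronglyMeasurable
  apply Filter.Eventually.of_forall
  intro ξ
  rcases le_total 0 ξ with hξ | hξ
  · refine le_trans (fourier_g_bound ht z w hlam (by positivity : (0:ℝ) < 2 * lam) ξ) ?_
    have : Real.exp (2 * Real.pi * ξ * (lam - 2 * lam)) ≤ Real.exp (-(Real.pi * lam) * |ξ|) := by
      apply Real.exp_le_exp.2
      rw [_root_.abs_of_nonneg hξ]
      have hp : 0 ≤ Real.pi * lam * ξ :=
        mul_nonneg (mul_nonneg Real.pi_pos.le hlam.le) hξ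
      linarith
    calc Real.exp (2 * Real.pi * ξ * (lam - 2 * lam)) * M1
        ≤ Real.exp (-(Real.pi * lam) * |ξ|) * M := by
          apply mul_le_mul this (le_max_left _ _) hM1n (Real.exp_nonneg _)
      _ = M * Real.exp (-(Real.pi * lam) * |ξ|) := by ring
  · refine le_trans (fourier_g_bound ht z w hlam (by positivity : (0:ℝ) < lam / 2) ξ) ?_
    have : Real.exp (2 * Real.pi * ξ * (lam - lam / 2)) ≤ Real.exp (-(Real.pi * lam) * |ξ|) := by
      apply Real.exp_le_exp.2
      rw [_root_.abs_of_nonpos hξ]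
      linarith [le_refl (Real.pi * lam * ξ)]
    calc Real.exp (2 * Real.pi * ξ * (lam - lam / 2)) * M2
        ≤ Real.exp (-(Real.pi * lam) * |ξ|) * M := by
          apply mul_le_mul this (le_max_right _ _) hM2n (Real.exp_nonneg _)
      _ = M * Real.exp (-(Real.pi * lam) * |ξ|) := by ring

/-- For every `λ > 0` and `(z,w) ∈ ℂ^{2n}`, the function
`η ↦ e^{2λη} W_t^+(z,w,iη)` is absolutely integrable on `ℝ` and
`W_t^λ(z,w) = e^{-2tλ²} ∫_ℝ e^{2λη} W_t^+(z,w,iη) dη`, where `W_t^λ` is the (positive)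
λ-twisted weight function. -/
theorem partial_weight_inverts_to_twisted_weight
    (n : ℕ) (hn : 1 ≤ n) (t : ℝ) (ht : 0 < t)
    (lam : ℝ) (hlam : 0 < lam) (z w : Fin n → ℂ) :
    Integrable (fun η : ℝ =>
        ((Real.exp (2 * lam * η) : ℝ) : ℂ) * Wplus n t z w ((η : ℂ) * Complex.I)) volume ∧
      WtC n t (lam : ℂ) z w
        = ((Real.exp (-2 * t * lam ^ 2) : ℝ) : ℂ) *
            ∫ η : ℝ,
              ((Real.exp (2 * lam * η) : ℝ) : ℂ) * Wplus n t z w ((η : ℂ) * Complex.I) := by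
  have hπ : Real.pi ≠ 0 := Real.pi_ne_zero
  set g : ℝ → ℂ := fun y => Fg n t 0 z w ((lam : ℝ) + y * I) with hg
  have hgint : Integrable g := Fg_line_integrable ht z w hlam 0
  have hgcont : Continuous g := by
    rw [continuous_iff_continuousAt]
    intro y
    have h1 : ContinuousAt (Fg n t 0 z w) ((lam : ℝ) + y * I) :=
      (Fg_differentiableAt ht (by simpa using hlam)).continuousAt
    have h2 : ContinuousAt (fun y : ℝ => ((lam : ℝ) : ℂ) + (y : ℂ) * I) y := by fun_prop
    exact ContinuousAt.comp (g := Fg n t 0 z w)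
      (f := fun y : ℝ => ((lam : ℝ) : ℂ) + (y : ℂ) * I) (x := y) h1 h2
  have hFint : Integrable (𝓕 g) := fourier_g_integrable ht z w hlam
  -- pointwise identity
  have hpt : ∀ η : ℝ, ((Real.exp (2 * lam * η) : ℝ) : ℂ) * Wplus n t z w ((η : ℂ) * Complex.I)
      = ((Real.pi⁻¹ : ℝ) : ℂ) * 𝓕 g (η / Real.pi) := by
    intro η
    have hW : Wplus n t z w ((η : ℂ) * Complex.I)
        = ((2 * Real.pi)⁻¹ : ℝ) * ∫ s : ℝ, Fg n t η z w ((1 : ℂ) + Complex.I * s / 2) := by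
      simp only [Wplus, Complex.mul_I_im, Complex.ofReal_re, Fg]
    have hre : ∫ s : ℝ, Fg n t η z w ((1 : ℂ) + Complex.I * s / 2)
        = (2 : ℝ) • ∫ y : ℝ, Fg n t η z w (((1 : ℝ) : ℂ) + y * I) := by
      have h : (fun s : ℝ => Fg n t η z w ((1 : ℂ) + Complex.I * s / 2))
          = fun s : ℝ => Fg n t η z w (((1 : ℝ) : ℂ) + ((s / 2 : ℝ) : ℂ) * I) := by
        funext s
        congr 1
        push_cast
        ring
      rw [h, MeasureTheory.Measure.integral_comp_div
        (fun y : ℝ => Fg n t η z w (((1 : ℝ) : ℂ) + (y : ℂ) * I)) 2]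
      norm_num
    have hshift : ∫ y : ℝ, Fg n t η z w (((1 : ℝ) : ℂ) + y * I)
        = ∫ y : ℝ, Fg n t η z w (((lam : ℝ) : ℂ) + y * I) :=
      Fg_shift ht z w one_pos hlam η
    have hfour := Fg_fourier_eq (n := n) (t := t) z w (lam := lam) (η / Real.pi)
    have e1 : Real.pi * (η / Real.pi) = η := by field_simp
    have e2 : 2 * Real.pi * (η / Real.pi) * lam = 2 * lam * η := by
      field_simp
    rw [e1, e2] at hfour
    calc ((Real.exp (2 * lam * η) : ℝ) : ℂ) * Wplus n t z w ((η : ℂ) * Complex.I)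
        = ((Real.exp (2 * lam * η) : ℝ) : ℂ) * (((2 * Real.pi)⁻¹ : ℝ) *
            ((2 : ℝ) • ∫ y : ℝ, Fg n t η z w (((lam : ℝ) : ℂ) + y * I))) := by
          rw [hW, hre, hshift]
      _ = ((Real.pi⁻¹ : ℝ) : ℂ) * (Complex.exp ((2 * lam * η : ℝ) : ℂ) *
            ∫ y : ℝ, Fg n t η z w (((lam : ℝ) : ℂ) + y * I)) := by
          rw [Complex.ofReal_exp, Complex.real_smul]
          push_cast
          have hπc : (Real.pi : ℂ) ≠ 0 := Complex.ofReal_ne_zero.2 hπ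
          generalize (∫ y : ℝ, Fg n t η z w (((lam : ℝ) : ℂ) + y * I)) = J
          field_simp
      _ = ((Real.pi⁻¹ : ℝ) : ℂ) * 𝓕 g (η / Real.pi) := by rw [hfour]
  constructor
  · have h1 : Integrable (fun η : ℝ => ((Real.pi⁻¹ : ℝ) : ℂ) * 𝓕 g (η / Real.pi)) :=
      (hFint.comp_div hπ).const_mul _
    exact h1.congr (Filter.Eventually.of_forall fun η => (hpt η).symm)
  · have hI1 : (∫ η : ℝ, ((Real.exp (2 * lam * η) : ℝ) : ℂ) *
          Wplus n t z w ((η : ℂ) * Complex.I))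
        = ((Real.pi⁻¹ : ℝ) : ℂ) * ∫ η : ℝ, 𝓕 g (η / Real.pi) := by
      rw [MeasureTheory.integral_congr_ae (Filter.Eventually.of_forall hpt),
        MeasureTheory.integral_const_mul]
    have hI2 : (∫ η : ℝ, 𝓕 g (η / Real.pi)) = (Real.pi : ℝ) • ∫ ξ : ℝ, 𝓕 g ξ := by
      rw [MeasureTheory.Measure.integral_comp_div (𝓕 g) Real.pi,
        abs_of_pos Real.pi_pos]
    have hinv : (∫ ξ : ℝ, 𝓕 g ξ) = g 0 := by
      have h0 := hgint.fourierInv_fourier_eq hFint (v := 0) hgcont.continuousAt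
      rw [← h0, Real.fourierInv_eq]
      simp
    have hg0 : g 0 = Complex.exp (2 * t * (lam : ℂ) ^ 2) * WtC n t (lam : ℂ) z w := by
      simp [hg, Fg]
    rw [hI1, hI2, hinv, hg0, Complex.real_smul]
    have hE : ((Real.exp (-2 * t * lam ^ 2) : ℝ) : ℂ) * Complex.exp (2 * t * (lam : ℂ) ^ 2)
        = 1 := by
      rw [Complex.ofReal_exp, ← Complex.exp_add,
        show ((-2 * t * lam ^ 2 : ℝ) : ℂ) + 2 * t * (lam : ℂ) ^ 2 = 0 from by push_cast; ring,
        Complex.exp_zero]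
    have hππ : ((Real.pi⁻¹ : ℝ) : ℂ) * (Real.pi : ℂ) = 1 := by
      rw [Complex.ofReal_inv, inv_mul_cancel₀ (Complex.ofReal_ne_zero.2 hπ)]
    calc WtC n t (lam : ℂ) z w
        = (((Real.exp (-2 * t * lam ^ 2) : ℝ) : ℂ) * Complex.exp (2 * t * (lam : ℂ) ^ 2)) *
            ((((Real.pi⁻¹ : ℝ) : ℂ) * (Real.pi : ℂ)) * WtC n t (lam : ℂ) z w) := by
          rw [hE, hππ]
          ring
      _ = ((Real.exp (-2 * t * lam ^ 2) : ℝ) : ℂ) *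
            (((Real.pi⁻¹ : ℝ) : ℂ) * ((Real.pi : ℂ) *
              (Complex.exp (2 * t * (lam : ℂ) ^ 2) * WtC n t (lam : ℂ) z w))) := by
          ring
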